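/- Let G be a topological group, and let Γ₁, Γ₂ be closed subgroups of G such that the coset space G ⧸ (Γ₁ ∩ Γ₂) is compact. Then the subset (Γ₁ × Γ₂)·Δ(G) = {(γ₁ g, γ₂ g) : γ₁ ∈ Γ₁, γ₂ ∈ Γ₂, g ∈ G} is closed in G × G. -/

import Mathlib

open QuotientGroup

/-- The coset space of a topological group by a closed subgroup is Hausdorff. -/
theorem aux_t2Space_quotient {G : Type*} [Group G] [TopologicalSpace G] [IsTopologicalGroup G]
    (Γ : Subgroup G) (h : IsClosed (Γ : Set G)) : T2Space (G ⧸ Γ) := by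
  rw [t2_iff_isClosed_diagonal, ← isOpen_compl_iff]
  have hopen : IsOpenMap (Prod.map (mk : G → G ⧸ Γ) (mk : G → G ⧸ Γ)) :=
    (isOpenMap_coe).prodMap (isOpenMap_coe)
  have hset : (Set.diagonal (G ⧸ Γ))ᶜ =
      Prod.map (mk : G → G ⧸ Γ) (mk : G → G ⧸ Γ) '' {p : G × G | p.1⁻¹ * p.2 ∈ Γ}ᶜ := by
    ext ⟨u, v⟩
    constructor
    · rintro huv
      obtain ⟨x, rfl⟩ := QuotientGroup.mk_surjective u
      obtain ⟨y, rfl⟩ := QuotientGroup.mk_surjective v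
      refine ⟨(x, y), ?_, rfl⟩
      intro hxy
      exact huv (QuotientGroup.eq.mpr hxy)
    · rintro ⟨⟨x, y⟩, hxy, heq⟩ hdiag
      rw [← heq] at hdiag
      exact hxy (QuotientGroup.eq.mp hdiag)
  rw [hset]
  apply hopen
  rw [isOpen_compl_iff]
  exact h.preimage (by continuity)

/-- Let `G` be a topological group and `Γ₁, Γ₂` closed subgroups such that
`G ⧸ (Γ₁ ⊓ Γ₂)` is compact. Then the set
`(Γ₁ × Γ₂)·Δ(G) = {(γ₁ g, γ₂ g) : γ₁ ∈ Γ₁, γ₂ ∈ Γ₂, g ∈ G}` is closed in `G × G`. -/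
theorem isClosed_prod_mul_diagonal_of_compact_quotient
    {G : Type*} [Group G] [TopologicalSpace G] [IsTopologicalGroup G]
    (Γ₁ Γ₂ : Subgroup G)
    (h₁ : IsClosed (Γ₁ : Set G)) (h₂ : IsClosed (Γ₂ : Set G))
    (hc : CompactSpace (G ⧸ (Γ₁ ⊓ Γ₂))) :
    IsClosed {x : G × G | ∃ γ₁ ∈ Γ₁, ∃ γ₂ ∈ Γ₂, ∃ g : G, x = (γ₁ * g, γ₂ * g)} := by
  haveI := aux_t2Space_quotient Γ₁ h₁
  haveI := aux_t2Space_quotient Γ₂ h₂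
  -- the map from the compact quotient to the product of coset spaces
  have hwd : ∀ a b : G, QuotientGroup.leftRel (Γ₁ ⊓ Γ₂) a b →
      (((a : G ⧸ Γ₁), (a : G ⧸ Γ₂)) : (G ⧸ Γ₁) × (G ⧸ Γ₂)) = ((b : G ⧸ Γ₁), (b : G ⧸ Γ₂)) := by
    intro a b hab
    rw [QuotientGroup.leftRel_apply] at hab
    exact Prod.ext (QuotientGroup.eq.mpr hab.1) (QuotientGroup.eq.mpr hab.2)
  set φ : G ⧸ (Γ₁ ⊓ Γ₂) → (G ⧸ Γ₁) × (G ⧸ Γ₂) :=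
    fun q => Quotient.liftOn' q (fun g => ((g : G ⧸ Γ₁), (g : G ⧸ Γ₂))) hwd with hφ
  have hφc : Continuous φ :=
    Continuous.quotient_liftOn' (QuotientGroup.continuous_mk.prodMk QuotientGroup.continuous_mk) _
  have hK : IsCompact (Set.range φ) := isCompact_range hφc
  have hKc : IsClosed (Set.range φ) := hK.isClosed
  have hF : Continuous (fun x : G × G => (((x.1⁻¹ : G) : G ⧸ Γ₁), ((x.2⁻¹ : G) : G ⧸ Γ₂))) :=
    (QuotientGroup.continuous_mk.comp (continuous_inv.comp continuous_fst)).prodMk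
      (QuotientGroup.continuous_mk.comp (continuous_inv.comp continuous_snd))
  have key : {x : G × G | ∃ γ₁ ∈ Γ₁, ∃ γ₂ ∈ Γ₂, ∃ g : G, x = (γ₁ * g, γ₂ * g)} =
      (fun x : G × G => (((x.1⁻¹ : G) : G ⧸ Γ₁), ((x.2⁻¹ : G) : G ⧸ Γ₂))) ⁻¹' Set.range φ := by
    ext ⟨a, b⟩
    simp only [Set.mem_setOf_eq, Set.mem_preimage, Set.mem_range]
    constructor
    · rintro ⟨γ₁, hγ₁, γ₂, hγ₂, g, hx⟩
      obtain ⟨rfl, rfl⟩ : a = γ₁ * g ∧ b = γ₂ * g := Prod.mk.injEq .. ▸ (by exact_mod_cast hx)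
      refine ⟨(QuotientGroup.mk g⁻¹ : G ⧸ (Γ₁ ⊓ Γ₂)), ?_⟩
      simp only [hφ, Quotient.liftOn'_mk]
      refine Prod.ext ?_ ?_
      · exact QuotientGroup.eq.mpr (by simpa using inv_mem hγ₁)
      · exact QuotientGroup.eq.mpr (by simpa using inv_mem hγ₂)
    · rintro ⟨q, hq⟩
      obtain ⟨h, rfl⟩ := QuotientGroup.mk_surjective q
      simp only [hφ, Quotient.liftOn'_mk] at hq
      have h1 : h⁻¹ * a⁻¹ ∈ Γ₁ := QuotientGroup.eq.mp (congrArg Prod.fst hq)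
      have h2 : h⁻¹ * b⁻¹ ∈ Γ₂ := QuotientGroup.eq.mp (congrArg Prod.snd hq)
      refine ⟨a * h, by simpa [mul_inv_rev] using inv_mem h1,
        b * h, by simpa [mul_inv_rev] using inv_mem h2, h⁻¹, by simp⟩
  rw [key]
  exact hKc.preimage hF
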